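/- arXiv:2510.15855 — 2 statements merged into one kernel-verified Lean document; each statement's English description precedes it below -/
import Mathlib

section
/- Let X be a nonempty compact zero-dimensional Hausdorff space, Z = ω × X with ω discrete, and Z* = βZ \ Z. The injective homomorphism i : H(X) → H(Z*), i(f) = f^β (the restriction to Z* of the Stone extension of the homeomorphism f^ω(n,x) = (n, f(x)) of Z), is continuous as a map from H(X)_(δ), the Gδ-modification of H(X) with the compact-open topology, to H(Z*) with the compact-open topology. -/
open Set Topology TopologicalSpace

/-- The compact-open topology on the group of self-homeomorphisms of a space:
the topology induced from the compact-open topology on `C(X, X)`. -/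
instance homeomorphCompactOpen (X : Type*) [TopologicalSpace X] :
    TopologicalSpace (X ≃ₜ X) :=
  TopologicalSpace.induced (fun h : X ≃ₜ X => (h : C(X, X))) ContinuousMap.compactOpen

/-- The group of self-homeomorphisms of a space, under composition. -/
instance homeomorphGroup (X : Type*) [TopologicalSpace X] : Group (X ≃ₜ X) where
  mul f g := g.trans f
  one := Homeomorph.refl X
  inv := Homeomorph.symm
  mul_assoc _ _ _ := Homeomorph.ext fun _ => rfl
  one_mul _ := Homeomorph.ext fun _ => rfl
  mul_one _ := Homeomorph.ext fun _ => rfl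
  inv_mul_cancel f := Homeomorph.ext fun x => f.symm_apply_apply x

/-- The weight of a topological space: the least cardinality of a base of its topology. -/
noncomputable def TopologicalSpace.weight (X : Type u) [TopologicalSpace X] : Cardinal.{u} :=
  ⨅ B : {B : Set (Set X) // TopologicalSpace.IsTopologicalBasis B}, Cardinal.mk B.1

/-- A set is an Fσ-set if it is a countable union of closed sets. -/
def IsFsigma {X : Type*} [TopologicalSpace X] (s : Set X) : Prop :=
  ∃ F : ℕ → Set X, (∀ n, IsClosed (F n)) ∧ s = ⋃ n, F n

/-- An F-space (for normal spaces): disjoint open Fσ-sets have disjoint closures. -/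
def IsFSpace (X : Type*) [TopologicalSpace X] : Prop :=
  ∀ U V : Set X, IsOpen U → IsOpen V → IsFsigma U → IsFsigma V → Disjoint U V →
    Disjoint (closure U) (closure V)

/-- A Parovičenko space: a compact zero-dimensional F-space of weight `𝔠` in which
every nonempty Gδ-set has infinite interior. -/
structure IsParovicenko (X : Type u) [TopologicalSpace X] : Prop where
  compact : CompactSpace X
  t2 : T2Space X
  zeroDim : TopologicalSpace.IsTopologicalBasis {s : Set X | IsClopen s}
  fSpace : IsFSpace X
  weight_eq : TopologicalSpace.weight X = Cardinal.continuum
  gdelta_int : ∀ s : Set X, IsGδ s → s.Nonempty → (interior s).Infinite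

/-- The Gδ-modification of a topology: the topology generated by the Gδ-sets. -/
def gdeltaMod {X : Type*} (t : TopologicalSpace X) : TopologicalSpace X :=
  TopologicalSpace.generateFrom {s : Set X | @IsGδ X t s}

/-- The Čech–Stone remainder `βα \ α` of a space `α`. -/
abbrev CechStoneRemainder (α : Type u) [TopologicalSpace α] : Type u :=
  {p : StoneCech α // p ∉ Set.range (stoneCechUnit : α → StoneCech α)}

/-- `ω* = βω \ ω`, the Čech–Stone remainder of the countable discrete space `ω`. -/
abbrev OmegaStar : Type := CechStoneRemainder ℕ

variable {X : Type u} [TopologicalSpace X]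

/-- `f^ω : ω × X ≃ₜ ω × X`, `(n, x) ↦ (n, f x)`. -/
def fOmega (f : X ≃ₜ X) : (ℕ × X) ≃ₜ (ℕ × X) := (Homeomorph.refl ℕ).prodCongr f

/-- The Stone extension `βf^ω : β(ω × X) → β(ω × X)` of `f^ω` (composed with the unit). -/
noncomputable def betaFOmega (f : X ≃ₜ X) : StoneCech (ℕ × X) → StoneCech (ℕ × X) :=
  stoneCechExtend (continuous_stoneCechUnit.comp (fOmega f).continuous)

/-- For `E ⊆ α`, the trace `E* = cl_{βα} E ∩ (βα \ α)` of `E` on the remainder. -/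
def starSet {α : Type u} [TopologicalSpace α] (E : Set α) : Set (StoneCech α) :=
  closure (stoneCechUnit '' E) ∩ {p | p ∉ Set.range (stoneCechUnit : α → StoneCech α)}

section Aux

/-- Auxiliary: `⋃ n, {n} ×ˢ B n ⊆ ℕ × X`. -/
def sigmaSet {X : Type*} (B : ℕ → Set X) : Set (ℕ × X) := ⋃ n, {n} ×ˢ B n

theorem mem_sigmaSet {X : Type*} {B : ℕ → Set X} {p : ℕ × X} :
    p ∈ sigmaSet B ↔ p.2 ∈ B p.1 := by
  simp only [sigmaSet, mem_iUnion, mem_prod, mem_singleton_iff]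
  exact ⟨fun ⟨n, h1, h2⟩ => by rw [h1]; exact h2, fun h => ⟨p.1, rfl, h⟩⟩

theorem isClopen_sigmaSet {X : Type*} [TopologicalSpace X] {B : ℕ → Set X}
    (hB : ∀ n, IsClopen (B n)) : IsClopen (sigmaSet B) := by
  constructor
  · rw [← isOpen_compl_iff]
    have h : (sigmaSet B)ᶜ = sigmaSet (fun n => (B n)ᶜ) := by
      ext p; simp [mem_sigmaSet]
    rw [h]
    exact isOpen_iUnion fun n => (isOpen_discrete _).prod (hB n).compl.isOpen
  · exact isOpen_iUnion fun n => (isOpen_discrete _).prod (hB n).isOpen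

/-- For a clopen `S ⊆ α`, the closure of its image in `βα` is clopen, and a point of `α`
whose unit lies in this closure belongs to `S`. -/
theorem closure_image_unit_clopen {α : Type u} [TopologicalSpace α] {S : Set α}
    (hS : IsClopen S) :
    IsClopen (closure (stoneCechUnit '' S)) ∧
      ∀ a : α, stoneCechUnit a ∈ closure (stoneCechUnit '' S) → a ∈ S := by
  have hχ : Continuous S.boolIndicator := (continuous_boolIndicator_iff_isClopen S).mpr hS
  set h : StoneCech α → Bool := stoneCechExtend hχ with hh
  have hext : ∀ a, h (stoneCechUnit a) = S.boolIndicator a := fun a =>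
    congrFun (stoneCechExtend_extends hχ) a
  have hcont : Continuous h := continuous_stoneCechExtend hχ
  have hT : closure (stoneCechUnit '' S) ⊆ h ⁻¹' {true} := by
    apply closure_minimal _ (IsClosed.preimage hcont (isClosed_discrete _))
    rintro _ ⟨a, ha, rfl⟩
    simp only [mem_preimage, mem_singleton_iff, hext]
    exact (S.mem_iff_boolIndicator a).mp ha
  have hF : closure (stoneCechUnit '' Sᶜ) ⊆ h ⁻¹' {false} := by
    apply closure_minimal _ (IsClosed.preimage hcont (isClosed_discrete _))
    rintro _ ⟨a, ha, rfl⟩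
    simp only [mem_preimage, mem_singleton_iff, hext]
    exact (S.notMem_iff_boolIndicator a).mp ha
  have huniv : closure (stoneCechUnit '' S) ∪ closure (stoneCechUnit '' Sᶜ) = univ := by
    rw [← closure_union, ← image_union, union_compl_self, image_univ]
    exact denseRange_stoneCechUnit.closure_eq
  have heq : closure (stoneCechUnit '' S) = h ⁻¹' {true} := by
    apply subset_antisymm hT
    intro q hq
    have hqu : q ∈ closure (stoneCechUnit '' S) ∪ closure (stoneCechUnit '' Sᶜ) := by
      rw [huniv]; trivial
    rcases hqu with hq' | hq'
    · exact hq'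
    · exfalso
      have h1 : h q = false := hF hq'
      have h2 : h q = true := hq
      rw [h1] at h2; exact Bool.false_ne_true h2
  constructor
  · rw [heq]
    exact ⟨IsClosed.preimage hcont (isClosed_discrete _),
      IsOpen.preimage hcont (isOpen_discrete _)⟩
  · intro a ha
    by_contra hna
    have h1 : h (stoneCechUnit a) = false :=
      hF (subset_closure (mem_image_of_mem _ hna))
    have h2 := heq.subset ha
    simp only [mem_preimage, mem_singleton_iff] at h2
    rw [h1] at h2; exact Bool.false_ne_true h2

/-- Separation by clopen sets in a zero-dimensional space. -/
theorem exists_clopen_sep {X : Type*} [TopologicalSpace X]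
    (hzd : TopologicalSpace.IsTopologicalBasis {s : Set X | IsClopen s})
    {C D : Set X} (hC : IsCompact C) (hD : IsClosed D) (hdisj : Disjoint C D) :
    ∃ B : Set X, IsClopen B ∧ C ⊆ B ∧ Disjoint B D := by
  have h : ∀ x ∈ C, ∃ s, IsClopen s ∧ x ∈ s ∧ s ⊆ Dᶜ := by
    intro x hx
    obtain ⟨s, hs, hxs, hsD⟩ := hzd.exists_subset_of_mem_open
      (show x ∈ Dᶜ from fun hxD => disjoint_left.mp hdisj hx hxD) hD.isOpen_compl
    exact ⟨s, hs, hxs, hsD⟩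
  choose! s hs hxs hsD using h
  obtain ⟨b', hb'C, hb'fin, hb'cover⟩ := hC.elim_finite_subcover_image
    (fun x hx => (hs x hx).isOpen) (fun x hx => mem_biUnion hx (hxs x hx))
  refine ⟨⋃ x ∈ b', s x, hb'fin.isClopen_biUnion fun x hx => hs x (hb'C hx), hb'cover, ?_⟩
  rw [disjoint_left]
  intro a haB haD
  rw [mem_iUnion₂] at haB
  obtain ⟨x, hx, hax⟩ := haB
  exact hsD x (hb'C hx) hax haD

variable {X : Type} [TopologicalSpace X] [CompactSpace X] [T2Space X]

/-- Basis-type lemma: every point of an open `V ⊆ β(ℕ × X)` lies in a set of the form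
`cl(unit '' ΣB)` contained in `V`, with `B` a family of clopen subsets of `X`. -/
theorem exists_clopen_family (hzd : TopologicalSpace.IsTopologicalBasis {s : Set X | IsClopen s})
    {q : StoneCech (ℕ × X)} {V : Set (StoneCech (ℕ × X))} (hV : IsOpen V) (hq : q ∈ V) :
    ∃ B : ℕ → Set X, (∀ n, IsClopen (B n)) ∧
      q ∈ closure (stoneCechUnit '' sigmaSet B) ∧
      closure (stoneCechUnit '' sigmaSet B) ⊆ V := by
  obtain ⟨φ, hφ0, hφ1, hφ01⟩ := exists_continuous_zero_one_of_isClosed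
    (isClosed_singleton (x := q)) hV.isClosed_compl
    (Set.disjoint_singleton_left.mpr (fun h => h hq))
  have hc : Continuous fun z : ℕ × X => φ (stoneCechUnit z) :=
    φ.continuous.comp continuous_stoneCechUnit
  have hsep : ∀ n : ℕ, ∃ B, IsClopen B ∧ {x : X | φ (stoneCechUnit (n, x)) ≤ 1/3} ⊆ B ∧
      Disjoint B {x : X | 1/2 ≤ φ (stoneCechUnit (n, x))} := by
    intro n
    have hcn : Continuous fun x : X => φ (stoneCechUnit (n, x)) :=
      hc.comp (Continuous.prodMk_right n)
    apply exists_clopen_sep hzd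
    · exact (isClosed_le hcn continuous_const).isCompact
    · exact isClosed_le continuous_const hcn
    · rw [disjoint_left]
      intro x hx1 hx2
      simp only [mem_setOf_eq] at hx1 hx2
      linarith
  choose B hBclopen hB1 hB2 using hsep
  refine ⟨B, hBclopen, ?_, ?_⟩
  · have hOq : q ∈ φ ⁻¹' Iio (1/3 : ℝ) := by
      have h0 : φ q = 0 := hφ0 rfl
      simp only [mem_preimage, mem_Iio, h0]
      norm_num
    have hopen : IsOpen (φ ⁻¹' Iio (1/3 : ℝ)) := isOpen_Iio.preimage φ.continuous
    have hdense := denseRange_stoneCechUnit.open_subset_closure_inter hopen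
    have hsub : φ ⁻¹' Iio (1/3 : ℝ) ∩ range stoneCechUnit ⊆
        stoneCechUnit '' sigmaSet B := by
      rintro _ ⟨hmem, z, rfl⟩
      refine mem_image_of_mem _ ?_
      rw [mem_sigmaSet]
      apply hB1 z.1
      simp only [mem_setOf_eq, Prod.mk.eta]
      exact le_of_lt hmem
    exact closure_mono hsub (hdense hOq)
  · have h1 : stoneCechUnit '' sigmaSet B ⊆ φ ⁻¹' Iic (1/2 : ℝ) := by
      rintro _ ⟨z, hz, rfl⟩
      rw [mem_sigmaSet] at hz
      have hx : ¬(1/2 ≤ φ (stoneCechUnit (z.1, z.2))) :=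
        fun h => disjoint_left.mp (hB2 z.1) hz h
      simp only [mem_preimage, mem_Iic, Prod.mk.eta] at hx ⊢
      linarith [lt_of_not_ge hx]
    have h2 : closure (stoneCechUnit '' sigmaSet B) ⊆ φ ⁻¹' Iic (1/2 : ℝ) :=
      closure_minimal h1 (isClosed_Iic.preimage φ.continuous)
    intro w hw
    by_contra hwV
    have h3 : φ w = 1 := hφ1 hwV
    have h4 := h2 hw
    simp only [mem_preimage, mem_Iic, h3] at h4
    norm_num at h4

theorem continuous_betaFOmega (f : X ≃ₜ X) : Continuous (betaFOmega f) :=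
  continuous_stoneCechExtend _

theorem betaFOmega_unit (f : X ≃ₜ X) (z : ℕ × X) :
    betaFOmega f (stoneCechUnit z) = stoneCechUnit (z.1, f z.2) := by
  have h := congrFun
    (stoneCechExtend_extends (continuous_stoneCechUnit.comp (fOmega f).continuous)) z
  exact h

/-- A set is open in the Gδ-modification as soon as each of its points lies in a Gδ subset. -/
theorem isOpen_gdeltaMod_of_forall {Y : Type*} {t : TopologicalSpace Y} {S : Set Y}
    (h : ∀ y ∈ S, ∃ G : Set Y, @IsGδ Y t G ∧ y ∈ G ∧ G ⊆ S) :
    IsOpen[gdeltaMod t] S := by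
  letI := gdeltaMod t
  choose! G hG1 hG2 hG3 using h
  have hS : S = ⋃ y ∈ S, G y :=
    subset_antisymm (fun y hy => mem_biUnion hy (hG2 y hy)) (iUnion₂_subset hG3)
  rw [hS]
  exact isOpen_biUnion fun y hy => TopologicalSpace.isOpen_generateFrom_of_mem (hG1 y hy)

end Aux

/-- The map `i : H(X) → H(Z*)`, `i f = f^β`, is continuous from the
Gδ-modification of `H(X)` (with the compact-open topology) to `H(Z*)` with the
compact-open topology. -/
theorem continuous_gdeltaMod_to_homeoRemainder (X : Type) [TopologicalSpace X]
    [CompactSpace X] [T2Space X] [Nonempty X]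
    (hzd : TopologicalSpace.IsTopologicalBasis {s : Set X | IsClopen s})
    (i : (X ≃ₜ X) → (CechStoneRemainder (ℕ × X) ≃ₜ CechStoneRemainder (ℕ × X)))
    (hi : ∀ (f : X ≃ₜ X) (p : CechStoneRemainder (ℕ × X)),
      ((i f) p : StoneCech (ℕ × X)) = betaFOmega f (p : StoneCech (ℕ × X))) :
    Continuous[gdeltaMod (homeomorphCompactOpen X),
      homeomorphCompactOpen (CechStoneRemainder (ℕ × X))] i := by
  classical
  have main : Continuous[gdeltaMod (homeomorphCompactOpen X), ContinuousMap.compactOpen]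
      (fun f : X ≃ₜ X => ((i f : C(CechStoneRemainder (ℕ × X), CechStoneRemainder (ℕ × X))))) := by
    refine continuous_generateFrom_iff.mpr ?_
    rintro s hs
    rw [Set.mem_image2] at hs
    obtain ⟨K, hK, U, hU, rfl⟩ := hs
    apply isOpen_gdeltaMod_of_forall
    intro f hf
    -- `hf : MapsTo (i f) K U`
    obtain ⟨V, hVopen, hVU⟩ := isOpen_induced_iff.mp hU
    have hfV : ∀ p ∈ K, betaFOmega f (p : StoneCech (ℕ × X)) ∈ V := by
      intro p hp
      have h1 : i f p ∈ U := hf hp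
      rw [← hVU] at h1
      have h2 : ((i f p : CechStoneRemainder (ℕ × X)) : StoneCech (ℕ × X)) ∈ V := h1
      rwa [hi f p] at h2
    have hEx : ∀ p ∈ K, ∃ E : ℕ → Set X, (∀ n, IsClopen (E n)) ∧
        betaFOmega f (p : StoneCech (ℕ × X)) ∈ closure (stoneCechUnit '' sigmaSet E) ∧
        closure (stoneCechUnit '' sigmaSet E) ⊆ V :=
      fun p hp => exists_clopen_family hzd hVopen (hfV p hp)
    choose! E hEclopen hEmem hEV using hEx
    have hAx : ∀ p ∈ K, ∃ A : ℕ → Set X, (∀ n, IsClopen (A n)) ∧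
        (p : StoneCech (ℕ × X)) ∈ closure (stoneCechUnit '' sigmaSet A) ∧
        closure (stoneCechUnit '' sigmaSet A) ⊆
          betaFOmega f ⁻¹' closure (stoneCechUnit '' sigmaSet (E p)) := by
      intro p hp
      apply exists_clopen_family hzd
      · exact (closure_image_unit_clopen (isClopen_sigmaSet (hEclopen p hp))).1.2.preimage
          (continuous_betaFOmega f)
      · exact hEmem p hp
    choose! A hAclopen hAmem hAW using hAx
    have hKv : IsCompact (Subtype.val '' K) := hK.image continuous_subtype_val
    have hcover : Subtype.val '' K ⊆
        ⋃ p ∈ K, closure (stoneCechUnit '' sigmaSet (A p)) := by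
      rintro _ ⟨p, hp, rfl⟩
      exact mem_biUnion hp (hAmem p hp)
    obtain ⟨T, hTK, hTfin, hTcover⟩ := hKv.elim_finite_subcover_image
      (fun p hp => (closure_image_unit_clopen (isClopen_sigmaSet (hAclopen p hp))).1.2) hcover
    set AA : ℕ → Set X := fun n => ⋃ p ∈ T, A p n with hAA
    set EE : ℕ → Set X := fun n => ⋃ p ∈ T, E p n with hEE
    have hAAclopen : ∀ n, IsClopen (AA n) := fun n =>
      hTfin.isClopen_biUnion fun p hp => hAclopen p (hTK hp) n
    have hEEopen : ∀ n, IsOpen (EE n) := fun n =>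
      (hTfin.isClopen_biUnion fun p hp => hEclopen p (hTK hp) n).2
    have hsigA : ∀ p ∈ T, sigmaSet (A p) ⊆ sigmaSet AA := by
      intro p hp z hz
      rw [mem_sigmaSet] at hz ⊢
      exact mem_biUnion hp hz
    have hsigE : sigmaSet EE = ⋃ p ∈ T, sigmaSet (E p) := by
      ext z
      rw [mem_sigmaSet]
      show z.2 ∈ ⋃ p ∈ T, E p z.1 ↔ _
      rw [mem_iUnion₂, mem_iUnion₂]
      constructor
      · rintro ⟨p, hp, hz⟩
        exact ⟨p, hp, mem_sigmaSet.mpr hz⟩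
      · rintro ⟨p, hp, hz⟩
        rw [mem_sigmaSet] at hz
        exact ⟨p, hp, hz⟩
    have hEEV : closure (stoneCechUnit '' sigmaSet EE) ⊆ V := by
      rw [hsigE, image_iUnion₂, hTfin.closure_biUnion]
      exact iUnion₂_subset fun p hp => hEV p (hTK hp)
    have hKA : ∀ p ∈ K,
        (p : StoneCech (ℕ × X)) ∈ closure (stoneCechUnit '' sigmaSet AA) := by
      intro p hp
      have h1 := hTcover (mem_image_of_mem _ hp)
      rw [mem_iUnion₂] at h1
      obtain ⟨p', hp', hmem⟩ := h1
      exact closure_mono (image_mono (hsigA p' hp')) hmem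
    have hfAE : ∀ n, MapsTo f (AA n) (EE n) := by
      intro n x hx
      rw [hAA, mem_iUnion₂] at hx
      obtain ⟨p, hp, hxA⟩ := hx
      have hzmem : ((n, x) : ℕ × X) ∈ sigmaSet (A p) := mem_sigmaSet.mpr hxA
      have hw := hAW p (hTK hp) (subset_closure (mem_image_of_mem _ hzmem))
      rw [mem_preimage, betaFOmega_unit] at hw
      have hmem := (closure_image_unit_clopen (isClopen_sigmaSet (hEclopen p (hTK hp)))).2 _ hw
      rw [mem_sigmaSet] at hmem
      exact mem_biUnion hp hmem
    refine ⟨⋂ n, {g : X ≃ₜ X | MapsTo (⇑g) (AA n) (EE n)}, ?_, ?_, ?_⟩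
    · apply IsGδ.iInter_of_isOpen
      intro n
      have hopen : IsOpen {φ : C(X, X) | MapsTo ⇑φ (AA n) (EE n)} :=
        ContinuousMap.isOpen_setOf_mapsTo (hAAclopen n).1.isCompact (hEEopen n)
      exact isOpen_induced hopen
    · exact mem_iInter.mpr fun n => hfAE n
    · intro g hg
      simp only [mem_iInter, mem_setOf_eq] at hg
      show MapsTo _ K U
      intro p hp
      show i g p ∈ U
      rw [← hVU]
      show ((i g p : CechStoneRemainder (ℕ × X)) : StoneCech (ℕ × X)) ∈ V
      rw [hi g p]
      apply hEEV
      have h1 : betaFOmega g (p : StoneCech (ℕ × X)) ∈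
          betaFOmega g '' closure (stoneCechUnit '' sigmaSet AA) :=
        mem_image_of_mem _ (hKA p hp)
      have h2 := image_closure_subset_closure_image (continuous_betaFOmega g) h1
      refine closure_mono ?_ h2
      rintro _ ⟨_, ⟨z, hz, rfl⟩, rfl⟩
      rw [betaFOmega_unit]
      refine mem_image_of_mem _ ?_
      rw [mem_sigmaSet] at hz ⊢
      exact hg z.1 hz
  exact continuous_induced_rng.mpr main
end

section
/- Let B be a clopen subset of ω* = βω \ ω, and let 𝓩 be a finite partition of ω* into clopen sets such that every homeomorphism f of ω* satisfying f(Z) ⊆ Z for all Z ∈ 𝓩 also satisfies f(B) ⊆ B. Then for each Z ∈ 𝓩, either B ∩ Z = ∅ or Z ⊆ B. -/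
open Set Topology TopologicalSpace

noncomputable section OmegaStarAux

local notation "bu" => (stoneCechUnit : ℕ → StoneCech ℕ)

lemma bu_injective : Function.Injective bu := by
  intro a b h
  have := eq_if_stoneCechUnit_eq (f := fun m => decide (m = b))
    (continuous_of_discreteTopology) h
  simpa using this

lemma isOpen_singleton_bu (n : ℕ) : IsOpen ({bu n} : Set (StoneCech ℕ)) := by
  have hc : Continuous (fun m : ℕ => decide (m = n)) := continuous_of_discreteTopology
  set g := stoneCechExtend hc with hg
  have hO : IsOpen (g ⁻¹' {true}) :=
    (continuous_stoneCechExtend hc).isOpen_preimage _ (isOpen_discrete _)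
  have hmem : ∀ m : ℕ, (bu m ∈ g ⁻¹' {true} ↔ m = n) := by
    intro m
    have : g (bu m) = decide (m = n) := congrFun (stoneCechExtend_extends hc) m
    simp [Set.mem_preimage, this]
  have hsub : g ⁻¹' {true} ⊆ {bu n} := by
    have h1 : g ⁻¹' {true} ⊆ closure (g ⁻¹' {true} ∩ Set.range bu) :=
      denseRange_stoneCechUnit.open_subset_closure_inter hO
    have h2 : g ⁻¹' {true} ∩ Set.range bu ⊆ {bu n} := by
      rintro x ⟨hx, m, rfl⟩
      simp [(hmem m).mp hx]
    calc g ⁻¹' {true} ⊆ closure (g ⁻¹' {true} ∩ Set.range bu) := h1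
      _ ⊆ closure {bu n} := closure_mono h2
      _ = {bu n} := closure_singleton
  have : g ⁻¹' {true} = {bu n} :=
    hsub.antisymm (by intro x hx; rw [hx]; exact (hmem n).mpr rfl)
  exact this ▸ hO

lemma isOpen_range_bu : IsOpen (Set.range bu) := by
  have : Set.range bu = ⋃ n, ({bu n} : Set (StoneCech ℕ)) := by
    ext x; simp [Set.range]
  rw [this]
  exact isOpen_iUnion fun n => isOpen_singleton_bu n

lemma finite_of_closure_subset_range {A : Set ℕ}
    (h : closure (bu '' A) ⊆ Set.range bu) : A.Finite := by
  have hK : IsCompact (closure (bu '' A)) := isClosed_closure.isCompact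
  obtain ⟨t, ht⟩ := hK.elim_finite_subcover (fun n : ℕ => ({bu n} : Set (StoneCech ℕ)))
    (fun n => isOpen_singleton_bu n)
    (by intro x hx; obtain ⟨m, rfl⟩ := h hx; exact Set.mem_iUnion.mpr ⟨m, rfl⟩)
  have himg : bu '' A ⊆ bu '' (t : Set ℕ) := by
    intro x hx
    have := ht (subset_closure hx)
    simp only [Set.mem_iUnion, Set.mem_singleton_iff] at this
    obtain ⟨m, hm, rfl⟩ := this
    exact ⟨m, hm, rfl⟩
  have : A ⊆ (t : Set ℕ) := fun a ha => by
    obtain ⟨m, hm, he⟩ := himg ⟨a, ha, rfl⟩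
    exact bu_injective he ▸ hm
  exact (t.finite_toSet).subset this

/-- The "star" of a subset of `ℕ`: the trace of its closure on `ω*`. -/
def star' (A : Set ℕ) : Set (StoneCech ℕ) := closure (bu '' A) \ Set.range bu

lemma star'_finite {A : Set ℕ} (hA : A.Finite) : star' A = ∅ := by
  have h1 : (bu '' A).Finite := hA.image _
  have : closure (bu '' A) = bu '' A := h1.isClosed.closure_eq
  rw [star', this]
  ext x
  simp only [Set.mem_diff, Set.mem_empty_iff_false, iff_false, not_and, not_not]
  rintro ⟨m, _, rfl⟩; exact ⟨m, rfl⟩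

lemma star'_union (A C : Set ℕ) : star' (A ∪ C) = star' A ∪ star' C := by
  simp [star', Set.image_union, closure_union, Set.union_diff_distrib]

lemma star'_congr_of_finite {A C : Set ℕ} (h : (A ∩ C).Finite) :
    star' (A \ C) = star' A := by
  have : A = (A \ C) ∪ (A ∩ C) := by
    ext x; by_cases hx : x ∈ C <;> simp [hx]
  conv_rhs => rw [this]
  rw [star'_union, star'_finite h, Set.union_empty]

lemma infinite_of_star'_nonempty {A : Set ℕ} (h : (star' A).Nonempty) : A.Infinite := by
  rintro hfin
  rw [star'_finite hfin] at h
  exact h.ne_empty rfl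



lemma clopen_eq_star (U : Set {p : StoneCech ℕ // p ∉ Set.range bu}) (hU : IsClopen U) :
    ∃ A : Set ℕ, Subtype.val '' U = closure (bu '' A) \ Set.range bu := by
  classical
  have hSclosed : IsClosed (Set.range bu)ᶜ := isOpen_range_bu.isClosed_compl
  -- U compact in subtype, image compact, closed in StoneCech ℕ
  have hcs : CompactSpace {p : StoneCech ℕ // p ∉ Set.range bu} := isCompact_iff_compactSpace.mp hSclosed.isCompact
  have hUc : IsCompact (Subtype.val '' U) := (hU.isClosed.isCompact).image continuous_subtype_val
  have hVc : IsCompact (Subtype.val '' Uᶜ) := (hU.compl.isClosed.isCompact).image continuous_subtype_val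
  have hdisj : Disjoint (Subtype.val '' U) (Subtype.val '' Uᶜ) :=
    (Set.disjoint_image_iff Subtype.val_injective).mpr disjoint_compl_right
  obtain ⟨W, W', hWo, hW'o, hUW, hVW', hWW'⟩ :=
    SeparatedNhds.of_isCompact_isCompact_isClosed hUc hVc hVc.isClosed hdisj
  refine ⟨{n | bu n ∈ W}, ?_⟩
  apply Set.Subset.antisymm
  · intro x hx
    constructor
    · have h1 : W ⊆ closure (W ∩ Set.range bu) :=
        denseRange_stoneCechUnit.open_subset_closure_inter hWo
      have h2 : W ∩ Set.range bu ⊆ bu '' {n | bu n ∈ W} := by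
        rintro y ⟨hy, m, rfl⟩; exact ⟨m, hy, rfl⟩
      exact closure_mono h2 (h1 (hUW hx))
    · obtain ⟨u, _, rfl⟩ := hx; exact u.2
  · rintro x ⟨hxcl, hxr⟩
    by_contra hxU
    have hxV : x ∈ Subtype.val '' Uᶜ := by
      refine ⟨⟨x, hxr⟩, ?_, rfl⟩
      intro h
      exact hxU ⟨⟨x, hxr⟩, h, rfl⟩
    have hW'x : W' ∈ nhds x := hW'o.mem_nhds (hVW' hxV)
    have := mem_closure_iff_nhds.mp hxcl W' hW'x
    obtain ⟨y, hyW', m, hm, rfl⟩ := this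
    exact (Set.disjoint_left.mp hWW' hm hyW').elim

section Swap
open Classical in
/-- The involution of `ℕ` swapping disjoint sets `A` and `C` along `e`. -/
noncomputable def swapFun (A C : Set ℕ) (e : A ≃ C) (x : ℕ) : ℕ :=
  if hx : x ∈ A then (e ⟨x, hx⟩ : ℕ)
  else if hx : x ∈ C then (e.symm ⟨x, hx⟩ : ℕ)
  else x

variable {A C : Set ℕ}

open Classical in
lemma swapFun_mem_left (e : A ≃ C) {x : ℕ} (hx : x ∈ A) : swapFun A C e x = (e ⟨x, hx⟩ : ℕ) := by
  simp [swapFun, hx]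

open Classical in
lemma swapFun_mem_right (hd : Disjoint A C) (e : A ≃ C) {x : ℕ} (hx : x ∈ C) : swapFun A C e x = (e.symm ⟨x, hx⟩ : ℕ) := by
  have hxA : x ∉ A := Set.disjoint_right.mp hd hx
  simp [swapFun, hxA, hx]

open Classical in
lemma swapFun_not_mem (e : A ≃ C) {x : ℕ} (hxA : x ∉ A) (hxC : x ∉ C) : swapFun A C e x = x := by
  simp [swapFun, hxA, hxC]

lemma swapFun_involutive (hd : Disjoint A C) (e : A ≃ C) : Function.Involutive (swapFun A C e) := by
  intro x
  by_cases hx : x ∈ A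
  · rw [swapFun_mem_left e hx]
    rw [swapFun_mem_right hd e (e ⟨x, hx⟩).2]
    simp
  · by_cases hx' : x ∈ C
    · rw [swapFun_mem_right hd e hx']
      rw [swapFun_mem_left e (e.symm ⟨x, hx'⟩).2]
      simp
    · rw [swapFun_not_mem e hx hx', swapFun_not_mem e hx hx']

/-- The swap as an equivalence. -/
noncomputable def swapEquiv (hd : Disjoint A C) (e : A ≃ C) : ℕ ≃ ℕ := (swapFun_involutive hd e).toPerm _

lemma swapEquiv_image_left (hd : Disjoint A C) (e : A ≃ C) : swapEquiv hd e '' A ⊆ C := by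
  rintro _ ⟨x, hx, rfl⟩
  show swapFun A C e x ∈ C
  rw [swapFun_mem_left e hx]; exact (e ⟨x, hx⟩).2

lemma swapEquiv_image_right (hd : Disjoint A C) (e : A ≃ C) : swapEquiv hd e '' C ⊆ A := by
  rintro _ ⟨x, hx, rfl⟩
  show swapFun A C e x ∈ A
  rw [swapFun_mem_right hd e hx]; exact (e.symm ⟨x, hx⟩).2

lemma swapEquiv_apply_not_mem (hd : Disjoint A C) (e : A ≃ C) {x : ℕ} (hxA : x ∉ A) (hxC : x ∉ C) :
    swapEquiv hd e x = x := swapFun_not_mem e hxA hxC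

end Swap

section Congr
variable (σ : ℕ ≃ ℕ)

/-- A permutation of `ℕ` induces a homeomorphism of `βℕ`. -/
noncomputable def stoneCechCongr : StoneCech ℕ ≃ₜ StoneCech ℕ where
  toFun := stoneCechExtend (continuous_of_discreteTopology (f := bu ∘ σ))
  invFun := stoneCechExtend (continuous_of_discreteTopology (f := bu ∘ σ.symm))
  left_inv := by
    intro x
    refine congrFun (stoneCech_hom_ext (β := StoneCech ℕ)
      ((continuous_stoneCechExtend _).comp (continuous_stoneCechExtend _)) continuous_id ?_) x
    funext n
    have h1 : stoneCechExtend (continuous_of_discreteTopology (f := bu ∘ σ)) (stoneCechUnit n) = bu (σ n) :=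
      congrFun (stoneCechExtend_extends _) n
    have h2 : stoneCechExtend (continuous_of_discreteTopology (f := bu ∘ σ.symm)) (bu (σ n)) = bu (σ.symm (σ n)) :=
      congrFun (stoneCechExtend_extends _) (σ n)
    simp only [Function.comp_apply, id_eq, h1, h2, Equiv.symm_apply_apply]
  right_inv := by
    intro x
    refine congrFun (stoneCech_hom_ext (β := StoneCech ℕ)
      ((continuous_stoneCechExtend _).comp (continuous_stoneCechExtend _)) continuous_id ?_) x
    funext n
    have h1 : stoneCechExtend (continuous_of_discreteTopology (f := bu ∘ σ.symm)) (stoneCechUnit n) = bu (σ.symm n) :=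
      congrFun (stoneCechExtend_extends _) n
    have h2 : stoneCechExtend (continuous_of_discreteTopology (f := bu ∘ σ)) (bu (σ.symm n)) = bu (σ (σ.symm n)) :=
      congrFun (stoneCechExtend_extends _) (σ.symm n)
    simp only [Function.comp_apply, id_eq, h1, h2, Equiv.apply_symm_apply]
  continuous_toFun := continuous_stoneCechExtend _
  continuous_invFun := continuous_stoneCechExtend _

lemma stoneCechCongr_unit (n : ℕ) : stoneCechCongr σ (bu n) = bu (σ n) :=
  congrFun (stoneCechExtend_extends (continuous_of_discreteTopology (f := bu ∘ σ))) n

lemma stoneCechCongr_symm_unit (n : ℕ) : (stoneCechCongr σ).symm (bu n) = bu (σ.symm n) :=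
  congrFun (stoneCechExtend_extends (continuous_of_discreteTopology (f := bu ∘ σ.symm))) n

lemma stoneCechCongr_range_iff (p : StoneCech ℕ) :
    stoneCechCongr σ p ∈ Set.range bu ↔ p ∈ Set.range bu := by
  constructor
  · rintro ⟨m, hm⟩
    have := congrArg (stoneCechCongr σ).symm hm
    rw [Homeomorph.symm_apply_apply, stoneCechCongr_symm_unit] at this
    exact ⟨σ.symm m, this⟩
  · rintro ⟨m, rfl⟩
    exact ⟨σ m, (stoneCechCongr_unit σ m).symm⟩

end Congr

end OmegaStarAux

local notation "bu" => (stoneCechUnit : ℕ → StoneCech ℕ)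

lemma star'_nonempty_of_infinite {A : Set ℕ} (hA : A.Infinite) : (star' A).Nonempty := by
  rw [Set.nonempty_iff_ne_empty]
  intro h
  apply hA
  apply finite_of_closure_subset_range
  intro x hx
  by_contra hxr
  exact (Set.eq_empty_iff_forall_notMem.mp h x) ⟨hx, hxr⟩

theorem partition_refines_clopen (B : Set OmegaStar) (hB : IsClopen B)
    (𝓩 : Set (Set OmegaStar)) (hfin : 𝓩.Finite) (hclopen : ∀ Z ∈ 𝓩, IsClopen Z)
    (hdisj : 𝓩.PairwiseDisjoint id) (hcover : ⋃₀ 𝓩 = Set.univ)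
    (hyp : ∀ f : OmegaStar ≃ₜ OmegaStar, (∀ Z ∈ 𝓩, f '' Z ⊆ Z) → f '' B ⊆ B) :
    ∀ Z ∈ 𝓩, B ∩ Z = ∅ ∨ Z ⊆ B := by
  intro Z hZ
  by_contra hcon
  push_neg at hcon
  obtain ⟨hne, hnsub⟩ := hcon
  -- U = B ∩ Z and V = Z \ B are nonempty clopen sets
  set U : Set OmegaStar := B ∩ Z with hUdef
  set V : Set OmegaStar := Z \ B with hVdef
  have hUne : U.Nonempty := hne
  have hVne : V.Nonempty := by
    rw [Set.nonempty_iff_ne_empty]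
    intro h
    exact hnsub fun x hx => by
      by_contra hxB
      exact (Set.eq_empty_iff_forall_notMem.mp h x) ⟨hx, hxB⟩
  have hUco : IsClopen U := hB.inter (hclopen Z hZ)
  have hVco : IsClopen V := (hclopen Z hZ).diff hB
  obtain ⟨A, hA⟩ := clopen_eq_star U hUco
  obtain ⟨C, hC⟩ := clopen_eq_star V hVco
  have hstarU : Subtype.val '' U = star' A := hA
  have hstarV : Subtype.val '' V = star' C := hC
  -- A ∩ C is finite
  have hdisjUV : Disjoint (Subtype.val '' U) (Subtype.val '' V) := by
    refine (Set.disjoint_image_iff Subtype.val_injective).mpr ?_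
    rw [Set.disjoint_left]
    rintro x ⟨hxB, _⟩ ⟨_, hxnB⟩
    exact hxnB hxB
  have hACfin : (A ∩ C).Finite := by
    by_contra hACinf
    obtain ⟨p, hp⟩ := star'_nonempty_of_infinite hACinf
    have hpA : p ∈ star' A :=
      ⟨closure_mono (Set.image_mono (f := _) Set.inter_subset_left) hp.1, hp.2⟩
    have hpC : p ∈ star' C :=
      ⟨closure_mono (Set.image_mono (f := _) Set.inter_subset_right) hp.1, hp.2⟩
    exact Set.disjoint_left.mp hdisjUV (hstarU ▸ hpA) (hstarV ▸ hpC)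
  set A' : Set ℕ := A \ C with hA'def
  set C' : Set ℕ := C \ A with hC'def
  have hstarA' : star' A' = star' A := star'_congr_of_finite hACfin
  have hstarC' : star' C' = star' C :=
    star'_congr_of_finite (by rwa [Set.inter_comm] at hACfin)
  have hd : Disjoint A' C' := disjoint_sdiff_sdiff
  -- A' and C' are infinite
  have hA'inf : A'.Infinite := by
    apply infinite_of_star'_nonempty
    rw [hstarA', ← hstarU]
    exact hUne.image _
  have hC'inf : C'.Infinite := by
    apply infinite_of_star'_nonempty
    rw [hstarC', ← hstarV]
    exact hVne.image _
  haveI : Infinite A' := hA'inf.to_subtype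
  haveI : Infinite C' := hC'inf.to_subtype
  obtain ⟨e⟩ : Nonempty (A' ≃ C') := nonempty_equiv_of_countable
  set σ : ℕ ≃ ℕ := swapEquiv hd e with hσdef
  set G : StoneCech ℕ ≃ₜ StoneCech ℕ := stoneCechCongr σ with hGdef
  -- the induced homeomorphism of ω*
  set f : OmegaStar ≃ₜ OmegaStar :=
    { toEquiv := G.toEquiv.subtypeEquiv fun p => (stoneCechCongr_range_iff σ p).symm.not
      continuous_toFun := Continuous.subtype_mk (G.continuous.comp continuous_subtype_val) _
      continuous_invFun :=
        Continuous.subtype_mk (G.symm.continuous.comp continuous_subtype_val) _ } with hfdef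
  have hfval : ∀ x : OmegaStar, (f x : StoneCech ℕ) = G x := fun x => rfl
  -- f maps U into V and V into U
  have hmap : ∀ (X Y : Set ℕ), σ '' X ⊆ Y →
      ∀ x : OmegaStar, (x : StoneCech ℕ) ∈ star' X → (f x : StoneCech ℕ) ∈ star' Y := by
    intro X Y hXY x hx
    constructor
    · have h1 : G ↑x ∈ G '' closure (bu '' X) := ⟨x, hx.1, rfl⟩
      have h2 : G '' closure (bu '' X) ⊆ closure (G '' (bu '' X)) :=
        image_closure_subset_closure_image G.continuous
      have h3 : G '' (bu '' X) ⊆ bu '' Y := by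
        rintro _ ⟨_, ⟨n, hn, rfl⟩, rfl⟩
        refine ⟨σ n, hXY ⟨n, hn, rfl⟩, ?_⟩
        exact (stoneCechCongr_unit σ n).symm
      rw [hfval]
      exact closure_mono h3 (h2 h1)
    · rw [hfval]
      exact (f x).2
  have hfU : ∀ x ∈ U, f x ∈ V := by
    intro x hx
    have hxs : (x : StoneCech ℕ) ∈ star' A' := by
      rw [hstarA', ← hstarU]; exact ⟨x, hx, rfl⟩
    have := hmap A' C' (swapEquiv_image_left hd e) x hxs
    rw [hstarC', ← hstarV] at this
    obtain ⟨v, hv, hveq⟩ := this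
    rwa [← Subtype.ext hveq.symm] at hv
  have hfV : ∀ x ∈ V, f x ∈ U := by
    intro x hx
    have hxs : (x : StoneCech ℕ) ∈ star' C' := by
      rw [hstarC', ← hstarV]; exact ⟨x, hx, rfl⟩
    have := hmap C' A' (swapEquiv_image_right hd e) x hxs
    rw [hstarA', ← hstarU] at this
    obtain ⟨v, hv, hveq⟩ := this
    rwa [← Subtype.ext hveq.symm] at hv
  -- f fixes points outside U ∪ V
  have hfix : ∀ x : OmegaStar, x ∉ U → x ∉ V → f x = x := by
    intro x hxU hxV
    have hxA : (x : StoneCech ℕ) ∉ closure (bu '' A') := by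
      intro h
      exact hxU (by
        have : (x : StoneCech ℕ) ∈ star' A' := ⟨h, x.2⟩
        rw [hstarA', ← hstarU] at this
        obtain ⟨u, hu, hueq⟩ := this
        rwa [← Subtype.ext hueq.symm] at hu)
    have hxC : (x : StoneCech ℕ) ∉ closure (bu '' C') := by
      intro h
      exact hxV (by
        have : (x : StoneCech ℕ) ∈ star' C' := ⟨h, x.2⟩
        rw [hstarC', ← hstarV] at this
        obtain ⟨u, hu, hueq⟩ := this
        rwa [← Subtype.ext hueq.symm] at hu)
    have hcover' : (Set.univ : Set (StoneCech ℕ)) =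
        closure (bu '' A') ∪ closure (bu '' C') ∪ closure (bu '' (A' ∪ C')ᶜ) := by
      have : Set.range bu = bu '' A' ∪ bu '' C' ∪ bu '' (A' ∪ C')ᶜ := by
        rw [← Set.image_union, ← Set.image_union, Set.union_compl_self, Set.image_univ]
      rw [← denseRange_stoneCechUnit.closure_eq, this, closure_union, closure_union]
    have hxrest : (x : StoneCech ℕ) ∈ closure (bu '' (A' ∪ C')ᶜ) := by
      have : (x : StoneCech ℕ) ∈ (Set.univ : Set (StoneCech ℕ)) := trivial
      rw [hcover'] at this
      rcases this with (h | h) | h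
      · exact absurd h hxA
      · exact absurd h hxC
      · exact h
    have heq : Set.EqOn (⇑G) id (closure (bu '' (A' ∪ C')ᶜ)) := by
      apply Set.EqOn.closure _ G.continuous continuous_id
      rintro _ ⟨n, hn, rfl⟩
      have hn' : n ∉ A' ∧ n ∉ C' := by
        simpa [Set.mem_union, not_or] using hn
      show G (bu n) = bu n
      rw [hGdef, stoneCechCongr_unit, hσdef, swapEquiv_apply_not_mem hd e hn'.1 hn'.2]
    apply Subtype.ext
    rw [hfval]
    exact heq hxrest
  -- f maps every member of 𝓩 into itself
  have hZmaps : ∀ Z' ∈ 𝓩, f '' Z' ⊆ Z' := by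
    rintro Z' hZ' _ ⟨x, hx, rfl⟩
    by_cases hxU : x ∈ U
    · have hxZ : x ∈ Z := hxU.2
      have hZeq : Z' = Z := by
        by_contra hne'
        exact Set.disjoint_left.mp (hdisj hZ' hZ hne') hx hxZ
      rw [hZeq]
      exact (hfU x hxU).1
    · by_cases hxV : x ∈ V
      · have hxZ : x ∈ Z := hxV.1
        have hZeq : Z' = Z := by
          by_contra hne'
          exact Set.disjoint_left.mp (hdisj hZ' hZ hne') hx hxZ
        rw [hZeq]
        exact (hfV x hxV).2
      · rw [hfix x hxU hxV]
        exact hx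
  -- contradiction
  obtain ⟨x₀, hx₀⟩ := hUne
  have hfB : f x₀ ∈ B := hyp f hZmaps ⟨x₀, hx₀.1, rfl⟩
  exact (hfU x₀ hx₀).2 hfB
end
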